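/- Let 𝔾 and 𝔽 be real separable Banach spaces and F : 𝔾 → 𝔽 a continuous linear operator. Let X be a 𝔾-valued random variable whose law is Gaussian with finite second moment, mean a and covariance function r, and let ε be an 𝔽-valued random variable, independent of X, whose law is Gaussian with finite second moment, mean 0 and covariance function v. Then the law of the (𝔾 × 𝔽)-valued random variable (X, F(X) + ε) is Gaussian, has mean (a, F(a)), and—identifying the continuous linear functionals on 𝔾 × 𝔽 with pairs (f,g) ∈ 𝔾* × 𝔽* acting as (x,y) ↦ f(x) + g(y)—its covariance function λ satisfies λ((f,g),(f',g')) = r(f + g∘F, f' + g'∘F) + v(g,g') for all f, f' ∈ 𝔾* and g, g' ∈ 𝔽*. -/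

import Mathlib

open MeasureTheory ProbabilityTheory
open scoped NNReal

section Aux
open Real
open scoped ENNReal

lemma pdf_prod_eq (m1 m2 : ℝ) {v1 v2 : ℝ≥0} (h1 : v1 ≠ 0) (h2 : v2 ≠ 0) (z x : ℝ) :
    gaussianPDFReal m1 v1 x * gaussianPDFReal m2 v2 (z - x)
      = gaussianPDFReal (m1 + m2) (v1 + v2) z
        * ((Real.sqrt (π / (((v1:ℝ) + v2) / (2 * v1 * v2))))⁻¹
        * Real.exp (-((((v1:ℝ) + v2) / (2 * v1 * v2)))
            * (x - (m1 + (z - m1 - m2) * v1 / (v1 + v2))) ^ 2)) := by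
  have hV1 : (0:ℝ) < v1 := by positivity
  have hV2 : (0:ℝ) < v2 := by positivity
  have hV : (0:ℝ) < (v1:ℝ) + v2 := by linarith
  have hπ : (0:ℝ) < π := pi_pos
  simp only [gaussianPDFReal_def, NNReal.coe_add]
  have hconst : (Real.sqrt (2 * π * v1))⁻¹ * (Real.sqrt (2 * π * v2))⁻¹
      = (Real.sqrt (2 * π * ((v1:ℝ) + v2)))⁻¹
        * (Real.sqrt (π / (((v1:ℝ) + v2) / (2 * v1 * v2))))⁻¹ := by
    rw [← mul_inv, ← mul_inv, ← Real.sqrt_mul (by positivity), ← Real.sqrt_mul (by positivity)]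
    congr 1
    field_simp
  have hexp : Real.exp (-(x - m1) ^ 2 / (2 * v1)) * Real.exp (-(z - x - m2) ^ 2 / (2 * v2))
      = Real.exp (-(z - (m1 + m2)) ^ 2 / (2 * ((v1:ℝ) + v2)))
        * Real.exp (-((((v1:ℝ) + v2) / (2 * v1 * v2)))
            * (x - (m1 + (z - m1 - m2) * v1 / ((v1:ℝ) + v2))) ^ 2) := by
    rw [← Real.exp_add, ← Real.exp_add]
    congr 1
    field_simp
    ring
  calc (Real.sqrt (2 * π * v1))⁻¹ * Real.exp (-(x - m1) ^ 2 / (2 * v1))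
        * ((Real.sqrt (2 * π * v2))⁻¹ * Real.exp (-(z - x - m2) ^ 2 / (2 * v2)))
      = (Real.sqrt (2 * π * v1))⁻¹ * (Real.sqrt (2 * π * v2))⁻¹
        * (Real.exp (-(x - m1) ^ 2 / (2 * v1)) * Real.exp (-(z - x - m2) ^ 2 / (2 * v2))) := by
        ring
    _ = _ := by rw [hconst, hexp]; ring

lemma lintegral_pdf_conv (m1 m2 : ℝ) {v1 v2 : ℝ≥0} (h1 : v1 ≠ 0) (h2 : v2 ≠ 0) (z : ℝ) :
    ∫⁻ x, gaussianPDF m1 v1 x * gaussianPDF m2 v2 (z - x)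
      = gaussianPDF (m1 + m2) (v1 + v2) z := by
  have hV1 : (0:ℝ) < v1 := by positivity
  have hV2 : (0:ℝ) < v2 := by positivity
  have hV : (0:ℝ) < (v1:ℝ) + v2 := by linarith
  have hπ : (0:ℝ) < π := pi_pos
  set b : ℝ := ((v1:ℝ) + v2) / (2 * v1 * v2) with hb_def
  have hb : 0 < b := by positivity
  set c : ℝ := m1 + (z - m1 - m2) * v1 / ((v1:ℝ) + v2) with hc_def
  have hint : Integrable (fun x => gaussianPDFReal m1 v1 x * gaussianPDFReal m2 v2 (z - x)) := by
    have : (fun x => gaussianPDFReal m1 v1 x * gaussianPDFReal m2 v2 (z - x))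
        = fun x => (gaussianPDFReal (m1 + m2) (v1 + v2) z * (Real.sqrt (π / b))⁻¹)
            * Real.exp (-b * (x - c) ^ 2) := by
      funext x; rw [pdf_prod_eq m1 m2 h1 h2 z x]; ring
    rw [this]
    exact ((integrable_exp_neg_mul_sq hb).comp_sub_right c).const_mul _
  simp only [gaussianPDF_def]
  rw [show (fun x => ENNReal.ofReal (gaussianPDFReal m1 v1 x)
        * ENNReal.ofReal (gaussianPDFReal m2 v2 (z - x)))
      = fun x => ENNReal.ofReal (gaussianPDFReal m1 v1 x * gaussianPDFReal m2 v2 (z - x)) from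
    funext fun x => (ENNReal.ofReal_mul (gaussianPDFReal_nonneg _ _ _)).symm]
  rw [← ofReal_integral_eq_lintegral_ofReal hint
    (ae_of_all _ fun x => mul_nonneg (gaussianPDFReal_nonneg _ _ _) (gaussianPDFReal_nonneg _ _ _))]
  congr 1
  have : ∀ x, gaussianPDFReal m1 v1 x * gaussianPDFReal m2 v2 (z - x)
      = (gaussianPDFReal (m1 + m2) (v1 + v2) z * (Real.sqrt (π / b))⁻¹)
          * Real.exp (-b * (x - c) ^ 2) := fun x => by rw [pdf_prod_eq m1 m2 h1 h2 z x]; ring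
  simp_rw [this]
  rw [integral_const_mul, integral_sub_right_eq_self (fun x => Real.exp (-b * x ^ 2)) c,
    integral_gaussian]
  rw [mul_assoc, inv_mul_cancel₀ (by positivity), mul_one]

lemma gaussianReal_conv (m1 m2 : ℝ) (v1 v2 : ℝ≥0) :
    Measure.map (fun p : ℝ × ℝ => p.1 + p.2)
        ((gaussianReal m1 v1).prod (gaussianReal m2 v2))
      = gaussianReal (m1 + m2) (v1 + v2) := by
  by_cases h1 : v1 = 0
  · subst h1
    rw [gaussianReal_zero_var, Measure.dirac_prod, Measure.map_map measurable_add
      (measurable_prodMk_left), zero_add]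
    have : ((fun p : ℝ × ℝ => p.1 + p.2) ∘ Prod.mk m1) = fun x => m1 + x := rfl
    rw [this, gaussianReal_map_const_add, add_comm]
  by_cases h2 : v2 = 0
  · subst h2
    rw [gaussianReal_zero_var, Measure.prod_dirac, Measure.map_map measurable_add
      (measurable_prodMk_right), add_zero]
    have : ((fun p : ℝ × ℝ => p.1 + p.2) ∘ (fun x => (x, m2))) = fun x => x + m2 := rfl
    rw [this, gaussianReal_map_add_const]
  -- nondegenerate case
  ext s hs
  rw [Measure.map_apply measurable_add hs, Measure.prod_apply (measurable_add hs)]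
  have hmk : ∀ x : ℝ, Prod.mk x ⁻¹' ((fun p : ℝ × ℝ => p.1 + p.2) ⁻¹' s)
      = (fun y => x + y) ⁻¹' s := fun x => rfl
  simp_rw [hmk]
  have hmes2 := measurable_gaussianPDF m2 v2
  have hstep : ∀ x : ℝ, gaussianReal m2 v2 ((fun y => x + y) ⁻¹' s)
      = ∫⁻ z, gaussianPDF m2 v2 (z - x) * s.indicator 1 z := by
    intro x
    rw [gaussianReal_apply _ h2]
    rw [← lintegral_indicator ((measurable_const_add x) hs)]
    have : ∀ y : ℝ, ((fun y => x + y) ⁻¹' s).indicator (gaussianPDF m2 v2) y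
        = gaussianPDF m2 v2 y * s.indicator 1 (x + y) := by
      intro y
      by_cases hy : x + y ∈ s <;>
        simp [Set.indicator_apply, Set.mem_preimage, hy]
    simp_rw [this]
    rw [← lintegral_add_right_eq_self (fun z => gaussianPDF m2 v2 (z - x) * s.indicator 1 z) x]
    congr 1
    funext y
    simp [add_sub_cancel_right, add_comm]
  simp_rw [hstep]
  have hmesin : Measurable (fun q : ℝ × ℝ => gaussianPDF m2 v2 (q.2 - q.1) * s.indicator 1 q.2) :=
    (hmes2.comp (measurable_snd.sub measurable_fst)).mul
      ((measurable_one.indicator hs).comp measurable_snd)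
  rw [gaussianReal_of_var_ne_zero _ h1,
    lintegral_withDensity_eq_lintegral_mul _ (measurable_gaussianPDF m1 v1)
      (Measurable.lintegral_prod_right
        (f := fun x z => gaussianPDF m2 v2 (z - x) * s.indicator 1 z) hmesin)]
  have hpull : ∀ x : ℝ, (gaussianPDF m1 v1 * fun x => ∫⁻ z, gaussianPDF m2 v2 (z - x) * s.indicator 1 z) x
      = ∫⁻ z, gaussianPDF m1 v1 x * (gaussianPDF m2 v2 (z - x) * s.indicator 1 z) := by
    intro x
    simp only [Pi.mul_apply]
    have hm : Measurable fun z : ℝ => gaussianPDF m2 v2 (z - x) * s.indicator 1 z :=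
      (hmes2.comp (measurable_sub_const x)).mul (measurable_one.indicator hs)
    rw [← lintegral_const_mul _ hm]
  simp_rw [hpull]
  rw [lintegral_lintegral_swap]
  · have hinner : ∀ z : ℝ, (∫⁻ x, gaussianPDF m1 v1 x * (gaussianPDF m2 v2 (z - x) * s.indicator 1 z))
        = gaussianPDF (m1 + m2) (v1 + v2) z * s.indicator 1 z := by
      intro z
      calc ∫⁻ x, gaussianPDF m1 v1 x * (gaussianPDF m2 v2 (z - x) * s.indicator 1 z)
          = ∫⁻ x, (gaussianPDF m1 v1 x * gaussianPDF m2 v2 (z - x)) * s.indicator 1 z := by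
            simp_rw [mul_assoc]
        _ = (∫⁻ x, gaussianPDF m1 v1 x * gaussianPDF m2 v2 (z - x)) * s.indicator 1 z := by
            have hm2 : Measurable fun x : ℝ => gaussianPDF m1 v1 x * gaussianPDF m2 v2 (z - x) := by
              have : Measurable fun x : ℝ => gaussianPDF m2 v2 (z - x) :=
                hmes2.comp (measurable_const.sub measurable_id)
              exact (measurable_gaussianPDF m1 v1).mul this
            rw [lintegral_mul_const _ hm2]
        _ = _ := by rw [lintegral_pdf_conv m1 m2 h1 h2 z]
    simp_rw [hinner]
    rw [gaussianReal_apply _ (by simp [h1]), ← lintegral_indicator hs]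
    congr 1
    funext z
    by_cases hz : z ∈ s <;> simp [Set.indicator_apply, hz]
  · exact (((measurable_gaussianPDF m1 v1).comp measurable_fst).mul
      ((hmes2.comp (measurable_snd.sub measurable_fst)).mul
        ((measurable_one.indicator hs).comp measurable_snd))).aemeasurable

lemma integrable_mul_of_memℒp_two {Ω : Type*} [MeasurableSpace Ω] {P : Measure Ω}
    {f g : Ω → ℝ} (hf : MemLp f 2 P) (hg : MemLp g 2 P) :
    Integrable (fun ω => f ω * g ω) P := by
  have h1 : Integrable (fun ω => ‖f ω‖ ^ 2) P := (memLp_two_iff_integrable_sq_norm hf.1).mp hf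
  have h2 : Integrable (fun ω => ‖g ω‖ ^ 2) P := (memLp_two_iff_integrable_sq_norm hg.1).mp hg
  refine ((h1.add h2).div_const 2).mono' (hf.1.mul hg.1) (ae_of_all _ fun ω => ?_)
  simp only [Pi.add_apply, Real.norm_eq_abs, abs_mul, sq_abs]
  nlinarith [sq_nonneg (|f ω| - |g ω|), abs_nonneg (f ω), abs_nonneg (g ω),
    sq_abs (f ω), sq_abs (g ω)]

lemma indep_gaussian_sum {Ω : Type*} [MeasurableSpace Ω] (P : Measure Ω)
    [IsProbabilityMeasure P] {X Y : Ω → ℝ} (hX : Measurable X) (hY : Measurable Y)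
    (hindep : IndepFun X Y P) {m1 m2 : ℝ} {v1 v2 : ℝ≥0}
    (hXg : P.map X = gaussianReal m1 v1) (hYg : P.map Y = gaussianReal m2 v2) :
    P.map (fun ω => X ω + Y ω) = gaussianReal (m1 + m2) (v1 + v2) := by
  have hprod := (indepFun_iff_map_prod_eq_prod_map_map hX.aemeasurable hY.aemeasurable).mp hindep
  have hcomp : (fun ω => X ω + Y ω)
      = (fun p : ℝ × ℝ => p.1 + p.2) ∘ (fun ω => (X ω, Y ω)) := rfl
  rw [hcomp, ← Measure.map_map measurable_add (hX.prodMk hY), hprod, hXg, hYg,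
    gaussianReal_conv]

end Aux

/-- A Borel probability measure on a real Banach space is Gaussian if every continuous linear
functional pushes it forward to a (possibly degenerate) Gaussian measure on `ℝ`. -/
def IsGaussianMeasure {E : Type*} [NormedAddCommGroup E] [NormedSpace ℝ E]
    [MeasurableSpace E] (μ : Measure E) : Prop :=
  ∀ f : E →L[ℝ] ℝ, ∃ (m : ℝ) (v : ℝ≥0), μ.map f = gaussianReal m v

/-- If `X` is a `𝔾`-valued Gaussian random variable with mean `a` and covariance
function `r`, `ε` is an `𝔽`-valued Gaussian random variable independent of `X` with mean `0`
and covariance function `v`, both with finite second moments, and `F : 𝔾 → 𝔽` is a continuous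
linear operator, then `(X, F(X) + ε)` is Gaussian on `𝔾 × 𝔽` with mean `(a, F(a))` and
covariance function `((f,g),(f',g')) ↦ r(f + g∘F, f' + g'∘F) + v(g,g')`, identifying a
functional on `𝔾 × 𝔽` with a pair `(f,g)` acting as `(x,y) ↦ f(x) + g(y)`. -/
theorem stmt6 {𝔾 : Type*} [NormedAddCommGroup 𝔾] [NormedSpace ℝ 𝔾] [CompleteSpace 𝔾]
    [TopologicalSpace.SeparableSpace 𝔾] [MeasurableSpace 𝔾] [BorelSpace 𝔾]
    {𝔽 : Type*} [NormedAddCommGroup 𝔽] [NormedSpace ℝ 𝔽] [CompleteSpace 𝔽]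
    [TopologicalSpace.SeparableSpace 𝔽] [MeasurableSpace 𝔽] [BorelSpace 𝔽]
    {Ω : Type*} [MeasurableSpace Ω] (P : Measure Ω) [IsProbabilityMeasure P]
    (F : 𝔾 →L[ℝ] 𝔽) (X : Ω → 𝔾) (ε : Ω → 𝔽) (hX : Measurable X) (hε : Measurable ε)
    (hindep : IndepFun X ε P)
    (hXgauss : IsGaussianMeasure (P.map X)) (hεgauss : IsGaussianMeasure (P.map ε))
    (hX2 : Integrable (fun ω => ‖X ω‖ ^ 2) P) (hε2 : Integrable (fun ω => ‖ε ω‖ ^ 2) P)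
    (a : 𝔾) (ha : ∫ ω, X ω ∂P = a) (hε0 : ∫ ω, ε ω ∂P = 0)
    (r : (𝔾 →L[ℝ] ℝ) → (𝔾 →L[ℝ] ℝ) → ℝ)
    (v : (𝔽 →L[ℝ] ℝ) → (𝔽 →L[ℝ] ℝ) → ℝ)
    (hr : ∀ f g : 𝔾 →L[ℝ] ℝ, r f g = ∫ ω, f (X ω - a) * g (X ω - a) ∂P)
    (hv : ∀ f g : 𝔽 →L[ℝ] ℝ, v f g = ∫ ω, f (ε ω) * g (ε ω) ∂P) :
    IsGaussianMeasure (P.map fun ω => ((X ω, F (X ω) + ε ω) : 𝔾 × 𝔽)) ∧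
      (∫ ω, ((X ω, F (X ω) + ε ω) : 𝔾 × 𝔽) ∂P) = (a, F a) ∧
      ∀ (f f' : 𝔾 →L[ℝ] ℝ) (g g' : 𝔽 →L[ℝ] ℝ),
        (∫ ω, (f.coprod g) ((X ω, F (X ω) + ε ω) - (a, F a)) *
            (f'.coprod g') ((X ω, F (X ω) + ε ω) - (a, F a)) ∂P)
          = r (f + g.comp F) (f' + g'.comp F) + v g g' := by
  have hX_L2 : MemLp X 2 P := (memLp_two_iff_integrable_sq_norm hX.aestronglyMeasurable).mpr hX2
  have hε_L2 : MemLp ε 2 P := (memLp_two_iff_integrable_sq_norm hε.aestronglyMeasurable).mpr hε2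
  have hXint : Integrable X P := hX_L2.integrable one_le_two
  have hεint : Integrable ε P := hε_L2.integrable one_le_two
  have hFXεm : Measurable (fun ω => F (X ω) + ε ω) := (F.measurable.comp hX).add hε
  have hpairm : Measurable (fun ω => ((X ω, F (X ω) + ε ω) : 𝔾 × 𝔽)) := hX.prodMk hFXεm
  refine ⟨?_, ?_, ?_⟩
  · -- Gaussianity
    intro φ
    set f : 𝔾 →L[ℝ] ℝ := φ.comp (ContinuousLinearMap.inl ℝ 𝔾 𝔽) with hf_def
    set g : 𝔽 →L[ℝ] ℝ := φ.comp (ContinuousLinearMap.inr ℝ 𝔾 𝔽) with hg_def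
    have hφ : ∀ x : 𝔾, ∀ y : 𝔽, φ (x, y) = f x + g y := by
      intro x y
      have hxy : ((x, y) : 𝔾 × 𝔽) = (x, 0) + (0, y) := by simp
      rw [hxy, map_add]
      rfl
    obtain ⟨mX, vX, hmX⟩ := hXgauss (f + g.comp F)
    obtain ⟨mε, vε, hmε⟩ := hεgauss g
    refine ⟨mX + mε, vX + vε, ?_⟩
    rw [Measure.map_map φ.measurable hpairm]
    have hcomp : (⇑φ ∘ fun ω => ((X ω, F (X ω) + ε ω) : 𝔾 × 𝔽))
        = fun ω => ((f + g.comp F) ∘ X) ω + (⇑g ∘ ε) ω := by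
      funext ω
      simp only [Function.comp_apply, hφ, map_add, ContinuousLinearMap.add_apply,
        ContinuousLinearMap.comp_apply]
      ring
    rw [hcomp]
    refine indep_gaussian_sum P ((f + g.comp F).measurable.comp hX) (g.measurable.comp hε)
      (hindep.comp (f + g.comp F).measurable g.measurable) ?_ ?_
    · rw [Measure.map_map (f + g.comp F).measurable hX] at hmX
      exact hmX
    · rw [Measure.map_map g.measurable hε] at hmε
      exact hmε
  · -- mean
    have hFX : Integrable (fun ω => F (X ω)) P := F.integrable_comp hXint
    have hsnd : Integrable (fun ω => F (X ω) + ε ω) P := hFX.add hεint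
    rw [integral_pair hXint hsnd, ha, integral_add hFX hεint, hε0, add_zero,
      F.integral_comp_comm hXint, ha]
  · -- covariance
    intro f f' g g'
    set u : 𝔾 →L[ℝ] ℝ := f + g.comp F with hu_def
    set u' : 𝔾 →L[ℝ] ℝ := f' + g'.comp F with hu'_def
    set A : Ω → ℝ := fun ω => u (X ω - a) with hA_def
    set A' : Ω → ℝ := fun ω => u' (X ω - a) with hA'_def
    set B : Ω → ℝ := fun ω => g (ε ω) with hB_def
    set B' : Ω → ℝ := fun ω => g' (ε ω) with hB'_def
    have hpt : ∀ ω, (f.coprod g) ((X ω, F (X ω) + ε ω) - (a, F a)) = A ω + B ω := by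
      intro ω
      simp only [hA_def, hB_def, hu_def, Prod.mk_sub_mk, ContinuousLinearMap.coprod_apply,
        ContinuousLinearMap.add_apply, ContinuousLinearMap.comp_apply, map_sub, map_add]
      ring
    have hpt' : ∀ ω, (f'.coprod g') ((X ω, F (X ω) + ε ω) - (a, F a)) = A' ω + B' ω := by
      intro ω
      simp only [hA'_def, hB'_def, hu'_def, Prod.mk_sub_mk, ContinuousLinearMap.coprod_apply,
        ContinuousLinearMap.add_apply, ContinuousLinearMap.comp_apply, map_sub, map_add]
      ring
    -- L² membership
    have hXa_L2 : MemLp (fun ω => X ω - a) 2 P := hX_L2.sub (memLp_const a)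
    have hA_L2 : MemLp A 2 P := u.comp_memLp' hXa_L2
    have hA'_L2 : MemLp A' 2 P := u'.comp_memLp' hXa_L2
    have hB_L2 : MemLp B 2 P := g.comp_memLp' hε_L2
    have hB'_L2 : MemLp B' 2 P := g'.comp_memLp' hε_L2
    have hAint : Integrable A P := hA_L2.integrable one_le_two
    have hA'int : Integrable A' P := hA'_L2.integrable one_le_two
    have hBint : Integrable B P := hB_L2.integrable one_le_two
    have hB'int : Integrable B' P := hB'_L2.integrable one_le_two
    -- independence of the pieces
    have hφA : Measurable (fun x : 𝔾 => u (x - a)) :=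
      u.measurable.comp (measurable_sub_const a)
    have hφA' : Measurable (fun x : 𝔾 => u' (x - a)) :=
      u'.measurable.comp (measurable_sub_const a)
    have hiAB' : IndepFun A B' P := hindep.comp hφA g'.measurable
    have hiBA' : IndepFun B A' P := (hindep.comp hφA' g.measurable).symm
    -- integrability of products
    have hAA' : Integrable (fun ω => A ω * A' ω) P := integrable_mul_of_memℒp_two hA_L2 hA'_L2
    have hBB' : Integrable (fun ω => B ω * B' ω) P := integrable_mul_of_memℒp_two hB_L2 hB'_L2
    have hAB' : Integrable (fun ω => A ω * B' ω) P := integrable_mul_of_memℒp_two hA_L2 hB'_L2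
    have hBA' : Integrable (fun ω => B ω * A' ω) P := integrable_mul_of_memℒp_two hB_L2 hA'_L2
    -- the centered means vanish
    have hXaint : Integrable (fun ω => X ω - a) P := hXint.sub (integrable_const a)
    have hXa0 : ∫ ω, (X ω - a) ∂P = 0 := by
      rw [integral_sub hXint (integrable_const a), ha, integral_const]
      simp
    have hAmean : ∫ ω, A ω ∂P = 0 := by
      rw [hA_def]
      rw [u.integral_comp_comm hXaint, hXa0, map_zero]
    have hA'mean : ∫ ω, A' ω ∂P = 0 := by
      rw [hA'_def]
      rw [u'.integral_comp_comm hXaint, hXa0, map_zero]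
    have hBmean : ∫ ω, B ω ∂P = 0 := by
      rw [hB_def, g.integral_comp_comm hεint, hε0, map_zero]
    have hB'mean : ∫ ω, B' ω ∂P = 0 := by
      rw [hB'_def, g'.integral_comp_comm hεint, hε0, map_zero]
    have hcross1 : ∫ ω, A ω * B' ω ∂P = 0 := by
      have h := hiAB'.integral_mul_eq_mul_integral hA_L2.1 hB'_L2.1
      calc ∫ ω, A ω * B' ω ∂P = ∫ ω, (A * B') ω ∂P := rfl
        _ = (∫ ω, A ω ∂P) * ∫ ω, B' ω ∂P := h
        _ = 0 := by rw [hAmean, zero_mul]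
    have hcross2 : ∫ ω, B ω * A' ω ∂P = 0 := by
      have h := hiBA'.integral_mul_eq_mul_integral hB_L2.1 hA'_L2.1
      calc ∫ ω, B ω * A' ω ∂P = ∫ ω, (B * A') ω ∂P := rfl
        _ = (∫ ω, B ω ∂P) * ∫ ω, A' ω ∂P := h
        _ = 0 := by rw [hBmean, zero_mul]
    calc ∫ ω, (f.coprod g) ((X ω, F (X ω) + ε ω) - (a, F a)) *
            (f'.coprod g') ((X ω, F (X ω) + ε ω) - (a, F a)) ∂P
        = ∫ ω, (A ω * A' ω + B ω * B' ω) + (A ω * B' ω + B ω * A' ω) ∂P := by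
          congr 1
          funext ω
          rw [hpt ω, hpt' ω]
          ring
      _ = ((∫ ω, A ω * A' ω ∂P) + ∫ ω, B ω * B' ω ∂P)
            + ((∫ ω, A ω * B' ω ∂P) + ∫ ω, B ω * A' ω ∂P) := by
          have h12 : Integrable (fun ω => A ω * A' ω + B ω * B' ω) P := hAA'.add hBB'
          have h34 : Integrable (fun ω => A ω * B' ω + B ω * A' ω) P := hAB'.add hBA'
          rw [integral_add h12 h34, integral_add hAA' hBB', integral_add hAB' hBA']
      _ = r u u' + v g g' := by
          rw [hcross1, hcross2, hr, hv]
          simp [hA_def, hA'_def, hB_def, hB'_def]
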